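/- arXiv:2605.18999 — 11 statements merged into one kernel-verified Lean document; each statement's English description precedes it below -/
import Mathlib

section
/- Let α ∈ (0,1), q = 1−α, and k ≥ 1 an integer. Then ∑_{i=0}^{k−1} q^{k−i}/√(i+1) ≤ q^{k/2}/α + √2·q/(α·√(k+2)). -/
open Finset Real

theorem stmt_0 (α : ℝ) (hα : α ∈ Set.Ioo (0:ℝ) 1) (q : ℝ) (hq : q = 1 - α)
    (k : ℕ) (hk : 1 ≤ k) :
    ∑ i ∈ Finset.range k, q ^ (k - i) / Real.sqrt (i + 1)
      ≤ q ^ ((k : ℝ) / 2) / α + Real.sqrt 2 * q / (α * Real.sqrt (k + 2)) := by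
  obtain ⟨hα0, hα1⟩ := hα
  have hq0 : 0 < q := by rw [hq]; linarith
  have hq1 : q < 1 := by rw [hq]; linarith
  have h1q : 1 - q = α := by rw [hq]; ring
  have gs : ∀ n : ℕ, ∑ t ∈ Finset.range n, q ^ t ≤ 1 / α := by
    intro n
    have hs := Summable.sum_le_tsum (Finset.range n) (fun i _ => pow_nonneg hq0.le i)
      (summable_geometric_of_lt_one hq0.le hq1)
    rw [one_div]
    rwa [tsum_geometric_of_lt_one hq0.le hq1, h1q] at hs
  set m := (k + 1) / 2 with hm
  have hmk : m ≤ k := by omega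
  rw [← Finset.sum_range_add_sum_Ico _ hmk]
  have hA : ∑ i ∈ Finset.range m, q ^ (k - i) / Real.sqrt (i + 1)
      ≤ q ^ ((k : ℝ) / 2) / α := by
    have h1 : ∀ i ∈ Finset.range m, q ^ (k - i) / Real.sqrt (i + 1) ≤ q ^ (k - i) := by
      intro i _
      apply div_le_self (pow_nonneg hq0.le _)
      have h1' : Real.sqrt 1 ≤ Real.sqrt (i + 1) :=
        Real.sqrt_le_sqrt (by linarith [Nat.cast_nonneg (α := ℝ) i])
      rwa [Real.sqrt_one] at h1'
    refine le_trans (Finset.sum_le_sum h1) ?_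
    have h2 : ∑ i ∈ Finset.range m, q ^ (k - i)
        = q ^ (k - m + 1) * ∑ t ∈ Finset.range m, q ^ t := by
      rw [← Finset.sum_range_reflect (fun t => q ^ t) m, Finset.mul_sum]
      apply Finset.sum_congr rfl
      intro i hi
      rw [Finset.mem_range] at hi
      rw [← pow_add]
      congr 1
      omega
    rw [h2]
    have h3 : q ^ (k - m + 1) ≤ q ^ ((k:ℝ)/2) := by
      rw [← Real.rpow_natCast q (k - m + 1)]
      apply Real.rpow_le_rpow_of_exponent_ge hq0 hq1.le
      have hcast : ((k - m + 1 : ℕ) : ℝ) = (k : ℝ) - (m : ℝ) + 1 := by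
        push_cast [Nat.cast_sub hmk]; ring
      have h2m : 2 * m ≤ k + 1 := by omega
      have h2m' : 2 * (m : ℝ) ≤ (k : ℝ) + 1 := by exact_mod_cast h2m
      rw [hcast]
      linarith
    calc q ^ (k - m + 1) * ∑ t ∈ Finset.range m, q ^ t
        ≤ q ^ ((k:ℝ)/2) * (1/α) :=
          mul_le_mul h3 (gs m) (Finset.sum_nonneg fun i _ => pow_nonneg hq0.le i)
            (Real.rpow_nonneg hq0.le _)
      _ = q ^ ((k:ℝ)/2) / α := by ring
  have hB : ∑ i ∈ Finset.Ico m k, q ^ (k - i) / Real.sqrt (i + 1)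
      ≤ Real.sqrt 2 * q / (α * Real.sqrt (k + 2)) := by
    have h1 : ∀ i ∈ Finset.Ico m k, q ^ (k - i) / Real.sqrt (i + 1)
        ≤ q ^ (k - i) * (Real.sqrt 2 / Real.sqrt (k + 2)) := by
      intro i hi
      rw [Finset.mem_Ico] at hi
      have hki : (k:ℝ) + 2 ≤ 2 * ((i:ℝ) + 1) := by
        have h' : k ≤ 2 * i := by omega
        have h'' : (k : ℝ) ≤ 2 * (i : ℝ) := by exact_mod_cast h'
        linarith
      have hsq : Real.sqrt (k + 2) ≤ Real.sqrt 2 * Real.sqrt (i + 1) := by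
        rw [← Real.sqrt_mul (by norm_num : (0:ℝ) ≤ 2)]
        exact Real.sqrt_le_sqrt (by linarith)
      rw [div_eq_mul_inv]
      apply mul_le_mul_of_nonneg_left ?_ (pow_nonneg hq0.le _)
      rw [← one_div, div_le_div_iff₀ (by positivity) (by positivity)]
      rw [one_mul]
      exact hsq
    have h2 : ∑ i ∈ Finset.Ico m k, q ^ (k - i)
        = q * ∑ t ∈ Finset.range (k - m), q ^ t := by
      rw [Finset.sum_Ico_eq_sum_range, ← Finset.sum_range_reflect (fun t => q ^ t) (k - m),
        Finset.mul_sum]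
      apply Finset.sum_congr rfl
      intro i hi
      rw [Finset.mem_range] at hi
      rw [mul_comm, ← pow_succ]
      congr 1
      omega
    calc ∑ i ∈ Finset.Ico m k, q ^ (k - i) / Real.sqrt (i + 1)
        ≤ ∑ i ∈ Finset.Ico m k, q ^ (k - i) * (Real.sqrt 2 / Real.sqrt (k + 2)) :=
          Finset.sum_le_sum h1
      _ = (∑ i ∈ Finset.Ico m k, q ^ (k - i)) * (Real.sqrt 2 / Real.sqrt (k + 2)) :=
          (Finset.sum_mul _ _ _).symm
      _ ≤ (q * (1 / α)) * (Real.sqrt 2 / Real.sqrt (k + 2)) := by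
          apply mul_le_mul_of_nonneg_right ?_ (by positivity)
          rw [h2]
          exact mul_le_mul_of_nonneg_left (gs _) hq0.le
      _ = Real.sqrt 2 * q / (α * Real.sqrt (k + 2)) := by
          have hs2 : Real.sqrt ((k:ℝ) + 2) ≠ 0 := by positivity
          field_simp
  exact add_le_add hA hB
end

section
/- Let a ∈ (0,1) and t ≥ 0 an integer. Then ∑_{k=0}^{t} a^k/√(k+1) ≤ 1 + (1/a)·√(π/log(1/a)). -/
open Finset Real

theorem stmt_1 (a : ℝ) (ha : a ∈ Set.Ioo (0:ℝ) 1) (t : ℕ) :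
    ∑ k ∈ Finset.range (t + 1), a ^ k / Real.sqrt (k + 1)
      ≤ 1 + (1 / a) * Real.sqrt (Real.pi / Real.log (1 / a)) := by
  obtain ⟨ha0, ha1⟩ := ha
  set L := Real.log (1 / a) with hLdef
  have hL : 0 < L := Real.log_pos (by rw [one_div]; exact (one_lt_inv₀ ha0).mpr ha1)
  have hLa : L = -Real.log a := by rw [hLdef, one_div, Real.log_inv]
  set f : ℝ → ℝ := fun x => a ^ x / Real.sqrt (x + 1) with hf
  set g : ℝ → ℝ := fun x => x ^ ((1/2 : ℝ) - 1) * Real.exp (-(L * x)) with hg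
  -- antitone
  have hanti : AntitoneOn f (Set.Icc (0:ℝ) ((0:ℝ) + t)) := by
    intro x hx y hy hxy
    simp only [hf]
    have hx0 : (0:ℝ) ≤ x := hx.1
    apply div_le_div₀ (by positivity)
      (Real.rpow_le_rpow_of_exponent_ge ha0 ha1.le hxy)
      (Real.sqrt_pos.mpr (by linarith))
      (Real.sqrt_le_sqrt (by linarith))
  have key := hanti.sum_le_integral
  -- integrability of g on Ioi 0
  have hg_int : MeasureTheory.IntegrableOn g (Set.Ioi (0:ℝ)) := by
    have h1 : MeasureTheory.IntegrableOn
        (fun x : ℝ => Real.exp (-x) * x ^ ((1/2 : ℝ) - 1)) (Set.Ioi (0:ℝ)) :=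
      Real.GammaIntegral_convergent (by norm_num)
    have h2 : MeasureTheory.IntegrableOn
        (fun x : ℝ => Real.exp (-(L * x)) * (L * x) ^ ((1/2 : ℝ) - 1)) (Set.Ioi (0:ℝ)) := by
      have := (MeasureTheory.integrableOn_Ioi_comp_mul_left_iff
        (fun x : ℝ => Real.exp (-x) * x ^ ((1/2 : ℝ) - 1)) 0 hL).mpr
      simpa using this (by simpa using h1)
    have h3 := (h2.const_mul (L ^ (-((1/2 : ℝ) - 1))))
    apply MeasureTheory.IntegrableOn.congr_fun h3 ?_ measurableSet_Ioi
    intro x hx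
    have hx0 : 0 < x := hx
    simp only [hg]
    rw [Real.mul_rpow hL.le hx0.le, Real.rpow_neg hL.le]
    field_simp
  -- pointwise bound f ≤ g on Ioc 0 t
  have hfg : ∀ x ∈ Set.Ioc (0:ℝ) (t:ℝ), f x ≤ g x := by
    intro x hx
    have hx0 : 0 < x := hx.1
    have hax : a ^ x = Real.exp (-(L * x)) := by
      rw [Real.rpow_def_of_pos ha0, hLa]; ring_nf
    simp only [hf, hg, hax]
    rw [div_eq_mul_inv, mul_comm (x ^ ((1/2:ℝ) - 1))]
    apply mul_le_mul_of_nonneg_left _ (Real.exp_nonneg _)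
    have : x ^ ((1/2 : ℝ) - 1) = (Real.sqrt x)⁻¹ := by
      rw [show (1/2 : ℝ) - 1 = -(1/2) by norm_num, Real.rpow_neg hx0.le,
        Real.sqrt_eq_rpow]
    rw [this]
    apply inv_anti₀ (Real.sqrt_pos.mpr hx0) (Real.sqrt_le_sqrt (by linarith))
  -- f integrable on Ioc 0 t
  have hf_cont : ContinuousOn f (Set.Icc (0:ℝ) (t:ℝ)) := by
    apply ContinuousOn.div
    · exact fun x _ => (Real.continuousAt_const_rpow ha0.ne').continuousWithinAt
    · exact (Real.continuous_sqrt.comp (continuous_add_right 1)).continuousOn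
    · intro x hx
      exact (Real.sqrt_pos.mpr (by linarith [hx.1])).ne'
  have hf_int : MeasureTheory.IntegrableOn f (Set.Ioc (0:ℝ) (t:ℝ)) :=
    (hf_cont.integrableOn_Icc).mono_set Set.Ioc_subset_Icc_self
  have hg_int' : MeasureTheory.IntegrableOn g (Set.Ioc (0:ℝ) (t:ℝ)) :=
    hg_int.mono_set Set.Ioc_subset_Ioi_self
  -- integral comparison
  have hI : (∫ x in (0:ℝ)..((0:ℝ) + t), f x) ≤ ∫ x in Set.Ioi (0:ℝ), g x := by
    rw [zero_add, intervalIntegral.integral_of_le (by positivity)]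
    calc (∫ x in Set.Ioc (0:ℝ) (t:ℝ), f x) ≤ ∫ x in Set.Ioc (0:ℝ) (t:ℝ), g x :=
          MeasureTheory.setIntegral_mono_on hf_int hg_int' measurableSet_Ioc hfg
      _ ≤ ∫ x in Set.Ioi (0:ℝ), g x := by
          apply MeasureTheory.setIntegral_mono_set hg_int
          · filter_upwards [MeasureTheory.ae_restrict_mem measurableSet_Ioi] with x hx
            have : (0:ℝ) < x := hx
            positivity
          · exact Filter.Eventually.of_forall Set.Ioc_subset_Ioi_self
  -- value of the Ioi integral
  have hval : (∫ x in Set.Ioi (0:ℝ), g x) = Real.sqrt (Real.pi / L) := by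
    rw [hg, Real.integral_rpow_mul_exp_neg_mul_Ioi (by norm_num : (0:ℝ) < 1/2) hL,
      Real.Gamma_one_half_eq]
    rw [show Real.pi / L = (1 / L) * Real.pi by ring,
      Real.sqrt_mul (by positivity), Real.sqrt_eq_rpow (1/L)]
  -- assemble
  rw [Finset.sum_range_succ']
  have h0 : a ^ 0 / Real.sqrt ((0:ℕ) + 1) = 1 := by norm_num
  rw [h0, add_comm]
  gcongr 1 + ?_
  have hsum : ∑ i ∈ Finset.range t, a ^ (i + 1) / Real.sqrt (↑(i + 1) + 1)
      = ∑ i ∈ Finset.range t, f ((0:ℝ) + (i + 1 : ℕ)) := by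
    apply Finset.sum_congr rfl
    intro i _
    simp only [hf, zero_add]
    rw [← Real.rpow_natCast a (i + 1)]
  calc ∑ i ∈ Finset.range t, a ^ (i + 1) / Real.sqrt (↑(i + 1) + 1)
      = ∑ i ∈ Finset.range t, f ((0:ℝ) + (i + 1 : ℕ)) := hsum
    _ ≤ ∫ x in (0:ℝ)..((0:ℝ) + t), f x := key
    _ ≤ ∫ x in Set.Ioi (0:ℝ), g x := hI
    _ = Real.sqrt (Real.pi / L) := hval
    _ ≤ (1 / a) * Real.sqrt (Real.pi / L) := by
        apply le_mul_of_one_le_left (Real.sqrt_nonneg _)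
        rw [one_div]
        exact (one_le_inv₀ ha0).mpr ha1.le
end

section
/- Let (a_i)_{i=0}^{T+1} be a positive nondecreasing real sequence and T ≥ 1 an integer. Then min_{1 ≤ k ≤ T} a_{k+1}/(∑_{i=1}^{k} a_i) ≤ (1/T)·(a_{T+1}/a_0)^{1/T}·log(e·a_{T+1}/a_0). -/
open Finset Real

lemma log_pade {x : ℝ} (hx : 0 ≤ x) : Real.exp (2*x/(2+x)) ≤ 1 + x := by
  have key : 2*x/(2+x) ≤ Real.log (1+x) := by
    have hmono : MonotoneOn (fun y : ℝ => Real.log (1+y) - 2*y/(2+y)) (Set.Ici 0) := by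
      have hderiv : ∀ y ∈ Set.Ioi (0:ℝ),
          HasDerivAt (fun y : ℝ => Real.log (1+y) - 2*y/(2+y)) (1/(1+y) - 4/(2+y)^2) y := by
        intro y hy
        have hy0 : (0:ℝ) < y := hy
        have hl : HasDerivAt (fun y : ℝ => Real.log (1+y)) (1/(1+y)) y := by
          have h0 : HasDerivAt (fun y : ℝ => 1+y) 1 y := (hasDerivAt_id y).const_add 1
          simpa using h0.log (by linarith)
        have hq : HasDerivAt (fun y : ℝ => 2*y/(2+y)) (4/(2+y)^2) y := by
          have h2 : HasDerivAt (fun y : ℝ => 2*y) 2 y := by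
            simpa using (hasDerivAt_id y).const_mul (2:ℝ)
          have h3 : HasDerivAt (fun y : ℝ => 2+y) 1 y := (hasDerivAt_id y).const_add 2
          have h4 : HasDerivAt (fun y : ℝ => 2*y/(2+y)) _ y := h2.div h3 (by positivity)
          convert h4 using 1
          ring
        exact hl.sub hq
      apply monotoneOn_of_deriv_nonneg (convex_Ici 0)
      · apply ContinuousOn.sub
        · apply ContinuousOn.log
          · fun_prop
          · intro y hy
            have : (0:ℝ) ≤ y := hy
            positivity
        · apply ContinuousOn.div
          · fun_prop
          · fun_prop
          · intro y hy
            have : (0:ℝ) ≤ y := hy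
            positivity
      · intro y hy
        rw [interior_Ici] at hy
        exact (hderiv y hy).differentiableAt.differentiableWithinAt
      · intro y hy
        rw [interior_Ici] at hy
        rw [(hderiv y hy).deriv]
        have hy0 : (0:ℝ) < y := hy
        rw [sub_nonneg, div_le_div_iff₀ (by positivity) (by positivity)]
        nlinarith [sq_nonneg y]
    have h0 := hmono (Set.mem_Ici.2 le_rfl) (Set.mem_Ici.2 hx) hx
    simp only [add_zero, Real.log_one, mul_zero, zero_div, sub_zero] at h0
    have : Real.log 1 - 2*0/(2+0) = 0 := by norm_num
    linarith [h0]
  calc Real.exp (2*x/(2+x)) ≤ Real.exp (Real.log (1+x)) := Real.exp_le_exp.2 key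
    _ = 1 + x := Real.exp_log (by linarith)


lemma Zlem (u t : ℝ) (ht : 0 < t) (ht2 : t ≤ 1/2) (hu1 : u ≤ 1) (hc : t ≤ u*(1-t)) :
    0 ≤ (u*(1-t)-t) + 2*t^2 + t*(u-t)^2 - (u-2*t)^2 - 2*t*(u-t) := by
  nlinarith [sq_nonneg (u-t), sq_nonneg (u-2*t), mul_nonneg ht.le (sq_nonneg (u-t)),
    mul_nonneg (sub_nonneg.2 hc) (sub_nonneg.2 hu1), sq_nonneg (1-u), mul_pos ht ht,
    mul_nonneg (sub_nonneg.2 hc) ht.le]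

lemma assembly (u t d : ℝ) (ht : 0 < t) (ht2 : t ≤ 1/2) (hu1 : u ≤ 1)
    (hd0 : 0 ≤ d) (hdu : d ≤ u) (hc : t ≤ u*(1-t)) :
    0 ≤ (2+d)*u*(u - u^2 + t*(u^2+3*u-1-2*t-2*t*u+t^2))
      + 2*d*t*((1+u-t)*(u-d) - 2*(u-t)) := by
  have hu0 : 0 < u := by nlinarith
  have hut : t ≤ u := by nlinarith
  have hZ := Zlem u t ht ht2 hu1 hc
  set Z := (u*(1-t)-t) + 2*t^2 + t*(u-t)^2 - (u-2*t)^2 - 2*t*(u-t) with hZdef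
  have t1 : 0 ≤ 2*u*Z := by positivity
  have t2 : 0 ≤ d*u*(Z + 2*t*(u-t)) := by
    have : 0 ≤ Z + 2*t*(u-t) := by nlinarith
    positivity
  have t3 : 0 ≤ 2*d*t*((1+u-t)*(u-d)) := by
    have h1 : 0 ≤ 1+u-t := by linarith
    have h2 : 0 ≤ u-d := by linarith
    positivity
  have t4 : 0 ≤ 4*t*(u-t)*(u-d) := by
    have h2 : 0 ≤ u-d := by linarith
    have h3 : 0 ≤ u-t := by linarith
    positivity
  have hsum := add_nonneg (add_nonneg (add_nonneg t1 t2) t3) t4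
  have hid : (2+d)*u*(u - u^2 + t*(u^2+3*u-1-2*t-2*t*u+t^2))
      + 2*d*t*((1+u-t)*(u-d) - 2*(u-t))
      = 2*u*Z + d*u*(Z + 2*t*(u-t)) + 2*d*t*((1+u-t)*(u-d)) + 4*t*(u-t)*(u-d) := by
    rw [hZdef]; ring
  rw [hid]; exact hsum


set_option maxHeartbeats 2000000 in
lemma key_poly' (R m d : ℝ) (hR : 2 ≤ R) (hm0 : 0 ≤ m) (hm1 : 1 ≤ m*(R-1)) (hmR : 1 + m ≤ R)
    (hd0 : 0 ≤ d) (hdu : d ≤ (1+m)/R) :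
    m ≤ m/R + 2*d/(2+d) + (R - R*(1+d)/(1+m)) *
      (2*((1+m)*(R+m)/R^2)/(2+(1+m)*(R+m)/R^2)) := by
  have hR0 : (0:ℝ) < R := by linarith
  have hm1' : (0:ℝ) < 1 + m := by linarith
  have h2d : (0:ℝ) < 2 + d := by linarith
  have hu0 : (0:ℝ) < (1+m)/R := by positivity
  have ht : (0:ℝ) < 1/R := by positivity
  have ht2 : (1:ℝ)/R ≤ 1/2 := by
    rw [div_le_div_iff₀ hR0 (by norm_num)]; linarith
  have hu1 : (1+m)/R ≤ 1 := by rw [div_le_one hR0]; linarith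
  have hc : (1:ℝ)/R ≤ (1+m)/R*(1-1/R) := by
    have e : (1+m)/R*(1-1/R) - 1/R = (m*(R-1) - 1)/R^2 := by
      field_simp; ring
    have : (0:ℝ) ≤ (m*(R-1) - 1)/R^2 := by
      apply div_nonneg (by linarith) (by positivity)
    linarith
  have H := assembly ((1+m)/R) (1/R) d ht ht2 hu1 hd0 hdu hc
  rw [← sub_nonneg]
  have hcu : (0:ℝ) < 2+(1+m)*(R+m)/R^2 := by positivity
  have heq : m/R + 2*d/(2+d) + (R - R*(1+d)/(1+m)) *
      (2*((1+m)*(R+m)/R^2)/(2+(1+m)*(R+m)/R^2)) - m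
      = ((2+d)*((1+m)/R)*((1+m)/R - ((1+m)/R)^2 + (1/R)*(((1+m)/R)^2+3*((1+m)/R)-1-2*(1/R)-2*(1/R)*((1+m)/R)+(1/R)^2))
        + 2*d*(1/R)*((1+(1+m)/R-1/R)*((1+m)/R-d) - 2*((1+m)/R-1/R))) / ((1/R)*(2+d)*(2+((1+m)/R)*(1+(1+m)/R-1/R))) := by
    have hden : ((1+m)/R)*(1+(1+m)/R-1/R) = (1+m)*(R+m)/R^2 := by
      field_simp; ring
    rw [hden]
    field_simp
    ring
  rw [heq]
  apply div_nonneg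
  · convert H using 2
  · have h1 : (0:ℝ) ≤ 1+(1+m)/R-1/R := by nlinarith
    positivity


set_option maxHeartbeats 1000000 in
lemma core (T : ℕ) (hT : 1 ≤ T) (m : ℝ) (hm : 0 ≤ m) :
    ∃ k : ℕ, 1 ≤ k ∧ k ≤ T ∧
      Real.exp m ≤ Real.exp (m / T) * (1 + m) / T * k * (1 + Real.exp (m / T) * (1 + m) / T) ^ (T - k) := by
  have hR1 : (1:ℝ) ≤ (T:ℝ) := by exact_mod_cast hT
  have hR0 : (0:ℝ) < (T:ℝ) := by linarith
  set c : ℝ := Real.exp (m / T) * (1 + m) / T with hcdef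
  have hc0 : 0 < c := by positivity
  have hexpT : (Real.exp (m / T)) ^ T = Real.exp m := by
    rw [← Real.exp_nat_mul]
    congr 1
    field_simp
  by_cases hA : (T:ℝ) - 1 ≤ m
  · -- case A : k = 1
    refine ⟨1, le_rfl, hT, ?_⟩
    have h1m : (T:ℝ) ≤ 1 + m := by linarith
    have hpow1 : (1:ℝ) ≤ ((1+m)/T) ^ T := by
      apply one_le_pow₀
      rw [le_div_iff₀ hR0]; linarith
    have hc1 : (1:ℝ) ≤ c := by
      rw [hcdef, mul_div_assoc]
      have h2 : (1:ℝ) ≤ (1+m)/T := by rw [le_div_iff₀ hR0]; linarith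
      have h3 : (1:ℝ) ≤ Real.exp (m/T) := Real.one_le_exp (by positivity)
      nlinarith
    calc Real.exp m = Real.exp m * 1 := by ring
      _ ≤ Real.exp m * ((1+m)/T) ^ T := by
          apply mul_le_mul_of_nonneg_left hpow1 (Real.exp_nonneg m)
      _ = (Real.exp (m/T) * ((1+m)/T)) ^ T := by rw [mul_pow, hexpT]
      _ = c ^ T := by rw [hcdef, mul_div_assoc]
      _ = c * c ^ (T-1) := by
          rw [← pow_succ']
          congr 1
          omega
      _ ≤ c * (1+c) ^ (T-1) := by
          apply mul_le_mul_of_nonneg_left _ hc0.le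
          exact pow_le_pow_left₀ hc0.le (by linarith) _
      _ = c * (1:ℕ) * (1+c) ^ (T-1) := by norm_num
  · push_neg at hA
    have hT2n : 2 ≤ T := by
      have h : (1:ℝ) < (T:ℝ) := by linarith
      exact_mod_cast h
    have hT2 : (2:ℝ) ≤ (T:ℝ) := by exact_mod_cast hT2n
    by_cases hB : m * ((T:ℝ)-1) ≤ 1
    · -- case B : k = T
      refine ⟨T, hT, le_rfl, ?_⟩
      rw [Nat.sub_self, pow_zero, mul_one]
      have hcT : c * T = Real.exp (m/T) * (1+m) := by
        rw [hcdef]; field_simp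
      rw [hcT]
      have hm'0 : 0 ≤ m - m/(T:ℝ) := by
        rw [sub_nonneg, div_le_iff₀ hR0]
        nlinarith
      have hsplit : Real.exp m = Real.exp (m/T) * Real.exp (m - m/T) := by
        rw [← Real.exp_add]; ring_nf
      rw [hsplit]
      apply mul_le_mul_of_nonneg_left _ (Real.exp_nonneg _)
      have hm'eq : m - m/(T:ℝ) = m*((T:ℝ)-1)/T := by field_simp
      have hm'lt : m - m/(T:ℝ) ≤ 1/2 := by
        rw [hm'eq, div_le_iff₀ hR0]
        nlinarith
      have hpos : (0:ℝ) < 1 - (m - m/(T:ℝ)) := by linarith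
      have h1 : Real.exp (m - m/(T:ℝ)) * (1 - (m - m/(T:ℝ))) ≤ 1 := by
        have h2 : 1 - (m - m/(T:ℝ)) ≤ Real.exp (-(m - m/(T:ℝ))) := by
          have := Real.add_one_le_exp (-(m - m/(T:ℝ)))
          linarith
        calc Real.exp (m - m/(T:ℝ)) * (1 - (m - m/(T:ℝ)))
            ≤ Real.exp (m - m/(T:ℝ)) * Real.exp (-(m - m/(T:ℝ))) := by
              apply mul_le_mul_of_nonneg_left h2 (Real.exp_nonneg _)
          _ = 1 := by rw [← Real.exp_add]; simp
      have h3 : 1 ≤ (1+m)*(1 - (m - m/(T:ℝ))) := by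
        rw [hm'eq]
        have key : ((T:ℝ)-1)*(1+m) ≤ T := by nlinarith
        have expand : (1+m)*(1 - m*((T:ℝ)-1)/T) = 1 + m - m*(((T:ℝ)-1)*(1+m))/T := by
          field_simp
        rw [expand]
        have : m*(((T:ℝ)-1)*(1+m))/T ≤ m := by
          rw [div_le_iff₀ hR0]
          apply mul_le_mul_of_nonneg_left key hm
        linarith
      exact (mul_le_mul_iff_of_pos_right hpos).mp (by linarith [h1, h3])
    · -- case C : middle
      push_neg at hB
      set R : ℝ := (T:ℝ) with hRdef
      have hmR : 1 + m < R := by linarith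
      have hm1' : (0:ℝ) < 1+m := by linarith
      have hθ1 : 1 ≤ R*m/(1+m) := by
        rw [le_div_iff₀ hm1']
        nlinarith
      set j : ℕ := ⌊R*m/(1+m)⌋₊ with hjdef
      have hj1 : 1 ≤ j := Nat.le_floor (by exact_mod_cast hθ1)
      have hjθ : (j:ℝ) ≤ R*m/(1+m) := Nat.floor_le (by positivity)
      have hθj : R*m/(1+m) < (j:ℝ) + 1 := Nat.lt_floor_add_one _
      have hjm : (j:ℝ)*(1+m) ≤ R*m := by
        have := (le_div_iff₀ hm1').mp hjθ
        linarith
      have hjm2 : R*m < ((j:ℝ)+1)*(1+m) := by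
        have := (div_lt_iff₀ hm1').mp hθj
        linarith
      have hjT1 : (j:ℝ) ≤ R - 1 := by nlinarith
      have hjT' : j + 1 ≤ T := by
        have h : ((j:ℝ)+1) ≤ (T:ℝ) := by rw [← hRdef] at *; linarith
        exact_mod_cast h
      have hjT : j ≤ T := by omega
      refine ⟨T - j, by omega, Nat.sub_le _ _, ?_⟩
      have hTj : T - (T - j) = j := by omega
      have hcast : ((T - j : ℕ) : ℝ) = R - j := by
        rw [Nat.cast_sub hjT, hRdef]
      rw [hTj, hcast]
      set d : ℝ := (1+m)*(R - j)/R - 1 with hddef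
      have hd0 : 0 ≤ d := by
        rw [hddef, sub_nonneg, le_div_iff₀ hR0, one_mul]
        have h2 : (1+m)*(R-(j:ℝ)) = R + (R*m - (j:ℝ)*(1+m)) := by ring
        rw [h2]; linarith
      have hdu : d ≤ (1+m)/R := by
        rw [hddef, sub_le_iff_le_add]
        have key2 : (1+m)*(R-(j:ℝ)) ≤ R + (1+m) := by
          have h2 : (1+m)*(R-(j:ℝ)) = R + (R*m - ((j:ℝ)+1)*(1+m)) + (1+m) := by ring
          rw [h2]; linarith
        calc (1+m)*(R-(j:ℝ))/R ≤ (R + (1+m))/R := by gcongr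
          _ = (1+m)/R + 1 := by field_simp; ring
      have hjr : (j:ℝ) = R - R*(1+d)/(1+m) := by
        rw [hddef]
        field_simp
        ring
      set c0 : ℝ := (1+m)*(R+m)/R^2 with hc0def
      have hc00 : 0 < c0 := by rw [hc0def]; positivity
      have hc0c : c0 ≤ c := by
        rw [hc0def, hcdef]
        have h1 : m/R + 1 ≤ Real.exp (m/R) := Real.add_one_le_exp _
        have h2 : (1+m)*(R+m)/R^2 = ((m/R+1))*((1+m)/R) := by field_simp; ring
        rw [h2, mul_div_assoc]
        apply mul_le_mul_of_nonneg_right h1 (by positivity)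
      have hpoly : m ≤ m/R + 2*d/(2+d) + (j:ℝ) * (2*c0/(2+c0)) := by
        have hkp := key_poly' R m d hT2 hm hB.le hmR.le hd0 hdu
        rw [hjr, hc0def]
        exact hkp
      have hstep1 : Real.exp (2*d/(2+d)) ≤ 1 + d := log_pade hd0
      have hstep2 : (Real.exp (2*c0/(2+c0)))^j ≤ (1+c)^j := by
        apply pow_le_pow_left₀ (Real.exp_nonneg _)
        calc Real.exp (2*c0/(2+c0)) ≤ 1 + c0 := log_pade hc00.le
          _ ≤ 1 + c := by linarith
      have hstep3 : Real.exp ((j:ℝ) * (2*c0/(2+c0))) = (Real.exp (2*c0/(2+c0)))^j := by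
        rw [← Real.exp_nat_mul]
      have hkey : c * (R - j) = Real.exp (m/R) * (1+d) := by
        rw [hcdef, hddef, hRdef]
        field_simp
        ring
      have hd1 : (0:ℝ) ≤ 1 + d := by linarith
      calc Real.exp m ≤ Real.exp (m/R + 2*d/(2+d) + (j:ℝ) * (2*c0/(2+c0))) :=
            Real.exp_le_exp.2 hpoly
        _ = Real.exp (m/R) * Real.exp (2*d/(2+d)) * Real.exp ((j:ℝ) * (2*c0/(2+c0))) := by
            rw [← Real.exp_add, ← Real.exp_add]
        _ ≤ Real.exp (m/R) * (1+d) * (1+c)^j := by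
            apply mul_le_mul
            · exact mul_le_mul_of_nonneg_left hstep1 (Real.exp_nonneg _)
            · rw [hstep3]; exact hstep2
            · positivity
            · positivity
        _ = c * (R - j) * (1+c)^j := by rw [hkey]


theorem stmt_2 (T : ℕ) (hT : 1 ≤ T) (a : ℕ → ℝ)
    (hpos : ∀ i ≤ T + 1, 0 < a i)
    (hmono : ∀ i j, i ≤ j → j ≤ T + 1 → a i ≤ a j) :
    ∃ k, 1 ≤ k ∧ k ≤ T ∧
      a (k + 1) / (∑ i ∈ Finset.Icc 1 k, a i)
        ≤ (1 / T) * (a (T + 1) / a 0) ^ ((1 : ℝ) / T)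
            * Real.log (Real.exp 1 * a (T + 1) / a 0) := by
  have hR0 : (0:ℝ) < (T:ℝ) := by exact_mod_cast hT
  have hA0 : 0 < a 0 := hpos 0 (by omega)
  have hAT : 0 < a (T+1) := hpos (T+1) le_rfl
  have hQ1 : 1 ≤ a (T+1) / a 0 := by
    rw [le_div_iff₀ hA0, one_mul]
    exact hmono 0 (T+1) (by omega) le_rfl
  set m : ℝ := Real.log (a (T+1) / a 0) with hmdef
  have hm0 : 0 ≤ m := Real.log_nonneg hQ1
  have hexpm : Real.exp m = a (T+1) / a 0 := Real.exp_log (by positivity)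
  set c : ℝ := Real.exp (m / T) * (1 + m) / T with hcdef
  have hc0 : 0 < c := by positivity
  -- RHS equals c
  have hRHS : (1 / (T:ℝ)) * (a (T + 1) / a 0) ^ ((1 : ℝ) / T)
      * Real.log (Real.exp 1 * a (T + 1) / a 0) = c := by
    have h1 : Real.log (Real.exp 1 * a (T + 1) / a 0) = 1 + m := by
      rw [Real.log_div (by positivity) (ne_of_gt hA0),
          Real.log_mul (Real.exp_ne_zero 1) (ne_of_gt hAT), Real.log_exp, hmdef,
          Real.log_div (ne_of_gt hAT) (ne_of_gt hA0)]
      ring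
    have h2 : (a (T + 1) / a 0) ^ ((1 : ℝ) / T) = Real.exp (m / T) := by
      rw [Real.rpow_def_of_pos (by positivity), ← hmdef]
      congr 1
      ring
    rw [h1, h2, hcdef]
    ring
  by_contra hcon
  push_neg at hcon
  -- sums positive
  have hSpos : ∀ k, 1 ≤ k → k ≤ T → 0 < ∑ i ∈ Finset.Icc 1 k, a i := by
    intro k hk1 hkT
    apply Finset.sum_pos
    · intro i hi
      simp only [Finset.mem_Icc] at hi
      exact hpos i (by omega)
    · exact ⟨1, by simp [Finset.mem_Icc]; omega⟩
  have hgap : ∀ k, 1 ≤ k → k ≤ T → c * (∑ i ∈ Finset.Icc 1 k, a i) < a (k+1) := by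
    intro k hk1 hkT
    have h := hcon k hk1 hkT
    rw [hRHS] at h
    exact (lt_div_iff₀ (hSpos k hk1 hkT)).mp h
  -- S k ≥ k * a 0
  have hSlow : ∀ k, 1 ≤ k → k ≤ T → (k:ℝ) * a 0 ≤ ∑ i ∈ Finset.Icc 1 k, a i := by
    intro k hk1 hkT
    have h := Finset.card_nsmul_le_sum (Finset.Icc 1 k) a (a 0) ?_
    · rwa [Nat.card_Icc, Nat.add_sub_cancel, nsmul_eq_mul] at h
    · intro i hi
      simp only [Finset.mem_Icc] at hi
      exact hmono 0 i (by omega) (by omega)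
  -- growth
  have hgrow : ∀ jj k, 1 ≤ k → k + jj ≤ T →
      (1+c)^jj * (∑ i ∈ Finset.Icc 1 k, a i) ≤ ∑ i ∈ Finset.Icc 1 (k+jj), a i := by
    intro jj
    induction jj with
    | zero => intro k hk1 hkT; simp
    | succ n ih =>
      intro k hk1 hkT
      have hkn : k + n ≤ T := by omega
      have h1 := ih k hk1 (by omega)
      have h2 := hgap (k+n) (by omega) hkn
      have hsum : ∑ i ∈ Finset.Icc 1 (k+(n+1)), a i
          = (∑ i ∈ Finset.Icc 1 (k+n), a i) + a (k+n+1) := by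
        have : k+(n+1) = (k+n)+1 := by omega
        rw [this, Finset.sum_Icc_succ_top (by omega)]
      rw [hsum]
      have hS := hSpos (k+n) (by omega) hkn
      calc (1+c)^(n+1) * (∑ i ∈ Finset.Icc 1 k, a i)
          = (1+c) * ((1+c)^n * (∑ i ∈ Finset.Icc 1 k, a i)) := by ring
        _ ≤ (1+c) * (∑ i ∈ Finset.Icc 1 (k+n), a i) := by
            apply mul_le_mul_of_nonneg_left h1 (by positivity)
        _ = (∑ i ∈ Finset.Icc 1 (k+n), a i) + c * (∑ i ∈ Finset.Icc 1 (k+n), a i) := by ring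
        _ ≤ (∑ i ∈ Finset.Icc 1 (k+n), a i) + a (k+n+1) := by linarith
  -- get k₀ from core
  obtain ⟨k₀, hk₀1, hk₀T, hcore⟩ := core T hT m hm0
  have hST : (1+c)^(T-k₀) * (∑ i ∈ Finset.Icc 1 k₀, a i) ≤ ∑ i ∈ Finset.Icc 1 T, a i := by
    have := hgrow (T - k₀) k₀ hk₀1 (by omega)
    rwa [show k₀ + (T - k₀) = T by omega] at this
  -- chain of inequalities
  have h1 : c * ((1+c)^(T-k₀) * ((k₀:ℝ) * a 0)) < a (T+1) := by
    have hgT := hgap T hT le_rfl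
    have hlow := hSlow k₀ hk₀1 hk₀T
    have hmul1 : (1+c)^(T-k₀) * ((k₀:ℝ) * a 0) ≤ (1+c)^(T-k₀) * (∑ i ∈ Finset.Icc 1 k₀, a i) := by
      apply mul_le_mul_of_nonneg_left hlow (by positivity)
    have : (1+c)^(T-k₀) * ((k₀:ℝ) * a 0) ≤ ∑ i ∈ Finset.Icc 1 T, a i := le_trans hmul1 hST
    calc c * ((1+c)^(T-k₀) * ((k₀:ℝ) * a 0)) ≤ c * (∑ i ∈ Finset.Icc 1 T, a i) := by
          apply mul_le_mul_of_nonneg_left this hc0.le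
      _ < a (T+1) := hgT
  have h2 : a (T+1) ≤ c * ((1+c)^(T-k₀) * ((k₀:ℝ) * a 0)) := by
    have := mul_le_mul_of_nonneg_right hcore hA0.le
    rw [hexpm] at this
    rw [div_mul_cancel₀ _ (ne_of_gt hA0)] at this
    calc a (T+1) ≤ c * (k₀:ℝ) * (1+c)^(T-k₀) * a 0 := this
      _ = c * ((1+c)^(T-k₀) * ((k₀:ℝ) * a 0)) := by ring
  linarith
end

section
/- Let (r_i)_{i=0}^{T+1} be a positive nondecreasing real sequence and T ≥ 2 an integer. Then min over k in {⌊T/2⌋+1, …, T} of r_{k+1}/(∑_{i=1}^{k} r_i) ≤ (2/T)·(r_{T+1}/r_0)^{2/T}·log(e·r_{T+1}/r_0). -/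
open Finset Real

theorem stmt_3 (T : ℕ) (hT : 2 ≤ T) (r : ℕ → ℝ)
    (hpos : ∀ i ≤ T + 1, 0 < r i)
    (hmono : ∀ i j, i ≤ j → j ≤ T + 1 → r i ≤ r j) :
    ∃ k, T / 2 + 1 ≤ k ∧ k ≤ T ∧
      r (k + 1) / (∑ i ∈ Finset.Icc 1 k, r i)
        ≤ (2 / T) * (r (T + 1) / r 0) ^ ((2 : ℝ) / T)
            * Real.log (Real.exp 1 * r (T + 1) / r 0) := by
  by_contra hcon
  push_neg at hcon
  set s := T / 2 with hs
  have hsT : s + 1 ≤ T := by omega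
  have hT0 : (0:ℝ) < T := by exact_mod_cast (show 0 < T by omega)
  have hr0 : 0 < r 0 := hpos 0 (by omega)
  have hrT1 : 0 < r (T+1) := hpos (T+1) le_rfl
  set R : ℝ := r (T + 1) / r 0 with hR
  have hR1 : 1 ≤ R := (le_div_iff₀ hr0).mpr (by simpa using hmono 0 (T+1) (by omega) le_rfl)
  have hR0 : (0:ℝ) < R := lt_of_lt_of_le one_pos hR1
  have hlog : 0 ≤ Real.log R := Real.log_nonneg hR1
  have hL : Real.log (Real.exp 1 * r (T + 1) / r 0) = 1 + Real.log R := by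
    rw [mul_div_assoc, Real.log_mul (Real.exp_ne_zero 1) (ne_of_gt hR0), Real.log_exp]
  set c : ℝ := 2 / T * R ^ ((2:ℝ)/T) * (1 + Real.log R) with hc
  have hcon' : ∀ k, s + 1 ≤ k → k ≤ T →
      c < r (k + 1) / (∑ i ∈ Finset.Icc 1 k, r i) := by
    intro k h1 h2
    have := hcon k h1 h2
    rwa [hL] at this
  have hL1 : (1:ℝ) ≤ 1 + Real.log R := by linarith
  have hrpos : 0 < R ^ ((2:ℝ)/T) := Real.rpow_pos_of_pos hR0 _
  have hc0 : 0 < c := by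
    apply mul_pos (mul_pos (by positivity) hrpos) (by linarith)
  -- Key 1 : R^(2/T) ≤ 1 + c
  have key1 : R ^ ((2:ℝ)/T) ≤ 1 + c := by
    have hv : R ^ ((2:ℝ)/T) = Real.exp (2 / T * Real.log R) := by
      rw [Real.rpow_def_of_pos hR0, mul_comm]
    set v : ℝ := 2 / T * Real.log R with hvdef
    have h1 : (1 - v) * Real.exp v ≤ 1 := by
      have h2 : -v + 1 ≤ Real.exp (-v) := Real.add_one_le_exp (-v)
      have h3 : Real.exp (-v) * Real.exp v = 1 := by
        rw [← Real.exp_add]; simp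
      nlinarith [Real.exp_pos v]
    have h4 : (0:ℝ) < 2 / T := by positivity
    have hcform : c = (2 / T) * Real.exp v + v * Real.exp v := by
      rw [hc, hv, hvdef]; ring
    nlinarith [Real.exp_pos v]
  -- Key 2 : R ≤ c * (s+1) * (1+c)^(T-s-1)
  obtain ⟨n, hn⟩ : ∃ n, s + 1 + n = T := ⟨T - s - 1, by omega⟩
  have key2 : R ≤ c * (s + 1 : ℕ) * (1 + c) ^ n := by
    have hpow : R ^ ((2:ℝ)/T * n) ≤ (1 + c) ^ n := by
      calc R ^ ((2:ℝ)/T * n) = (R ^ ((2:ℝ)/T)) ^ (n:ℕ) := by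
            rw [← Real.rpow_natCast (R ^ ((2:ℝ)/T)) n, ← Real.rpow_mul hR0.le]
        _ ≤ (1 + c) ^ n := pow_le_pow_left₀ hrpos.le key1 n
    have hhalf : (1:ℝ) ≤ 2 / T * (s + 1 : ℕ) := by
      have h : (T:ℝ) ≤ 2 * ((s + 1 : ℕ) : ℝ) := by exact_mod_cast (show T ≤ 2 * (s+1) by omega)
      rw [div_mul_eq_mul_div, le_div_iff₀ hT0, one_mul]
      linarith
    have hexp : (1:ℝ) ≤ (2:ℝ)/T * n + 2/T := by
      have hT2 : (T:ℝ) ≤ 2 * (n:ℝ) + 2 := by exact_mod_cast (show T ≤ 2 * n + 2 by omega)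
      have heq : (2:ℝ)/T * n + 2/T = (2 * (n:ℝ) + 2)/T := by
        field_simp
      rw [heq, le_div_iff₀ hT0, one_mul]
      exact hT2
    calc R = R ^ (1:ℝ) := (Real.rpow_one R).symm
      _ ≤ R ^ ((2:ℝ)/T * n + 2/T) := Real.rpow_le_rpow_of_exponent_le hR1 hexp
      _ = R ^ ((2:ℝ)/T) * R ^ ((2:ℝ)/T * n) := by
          rw [← Real.rpow_add hR0]; ring_nf
      _ ≤ (R ^ ((2:ℝ)/T) * (1 + Real.log R)) * R ^ ((2:ℝ)/T * n) := by
          apply mul_le_mul_of_nonneg_right _ (Real.rpow_nonneg hR0.le _)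
          exact le_mul_of_one_le_right hrpos.le hL1
      _ ≤ (R ^ ((2:ℝ)/T) * (1 + Real.log R)) * (1 + c) ^ n := by
          apply mul_le_mul_of_nonneg_left hpow
          positivity
      _ ≤ (c * (s + 1 : ℕ)) * (1 + c) ^ n := by
          apply mul_le_mul_of_nonneg_right _ (by positivity)
          calc R ^ ((2:ℝ)/T) * (1 + Real.log R)
              = 1 * (R ^ ((2:ℝ)/T) * (1 + Real.log R)) := (one_mul _).symm
            _ ≤ (2 / T * (s + 1 : ℕ)) * (R ^ ((2:ℝ)/T) * (1 + Real.log R)) := by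
                apply mul_le_mul_of_nonneg_right hhalf
                positivity
            _ = c * (s + 1 : ℕ) := by rw [hc]; ring
      _ = c * (s + 1 : ℕ) * (1 + c) ^ n := rfl
  -- sum positivity
  have hApos : ∀ k, 1 ≤ k → k ≤ T → 0 < ∑ i ∈ Finset.Icc 1 k, r i := by
    intro k h1 h2
    apply Finset.sum_pos
    · intro i hi
      exact hpos i (by simp only [Finset.mem_Icc] at hi; omega)
    · exact ⟨1, Finset.mem_Icc.mpr ⟨le_rfl, h1⟩⟩
  -- growth
  have hstep : ∀ k, s + 1 ≤ k → k ≤ T →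
      (1 + c) * ∑ i ∈ Finset.Icc 1 k, r i ≤ ∑ i ∈ Finset.Icc 1 (k+1), r i := by
    intro k h1 h2
    have hA := hApos k (by omega) h2
    have := (lt_div_iff₀ hA).mp (hcon' k h1 h2)
    rw [Finset.sum_Icc_succ_top (by omega : 1 ≤ k + 1)]
    nlinarith
  have hgrow : ∀ m, s + 1 + m ≤ T →
      (1 + c) ^ m * ∑ i ∈ Finset.Icc 1 (s+1), r i ≤ ∑ i ∈ Finset.Icc 1 (s+1+m), r i := by
    intro m
    induction m with
    | zero => simp
    | succ m ih =>
      intro hm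
      have h1 : s + 1 + m ≤ T := by omega
      calc (1 + c) ^ (m+1) * ∑ i ∈ Finset.Icc 1 (s+1), r i
          = (1 + c) * ((1 + c) ^ m * ∑ i ∈ Finset.Icc 1 (s+1), r i) := by ring
        _ ≤ (1 + c) * ∑ i ∈ Finset.Icc 1 (s+1+m), r i := by
            apply mul_le_mul_of_nonneg_left (ih h1) (by positivity)
        _ ≤ ∑ i ∈ Finset.Icc 1 (s+1+m+1), r i := hstep (s+1+m) (by omega) (by omega)
        _ = ∑ i ∈ Finset.Icc 1 (s+1+(m+1)), r i := by ring_nf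
  -- base
  have hbase : ((s+1:ℕ):ℝ) * r 0 ≤ ∑ i ∈ Finset.Icc 1 (s+1), r i := by
    calc ((s+1:ℕ):ℝ) * r 0 = ∑ _i ∈ Finset.Icc 1 (s+1), r 0 := by
          rw [Finset.sum_const, Nat.card_Icc]
          simp [nsmul_eq_mul]
      _ ≤ ∑ i ∈ Finset.Icc 1 (s+1), r i := by
          apply Finset.sum_le_sum
          intro i hi
          exact hmono 0 i (Nat.zero_le _) (by simp only [Finset.mem_Icc] at hi; omega)
  -- final contradiction
  have hfin := (lt_div_iff₀ (hApos T (by omega) le_rfl)).mp (hcon' T hsT le_rfl)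
  have hchain : r (T+1) ≤ c * ∑ i ∈ Finset.Icc 1 T, r i := by
    have h1 : (1 + c) ^ n * ∑ i ∈ Finset.Icc 1 (s+1), r i ≤ ∑ i ∈ Finset.Icc 1 T, r i := by
      have := hgrow n (by omega)
      rwa [hn] at this
    have h2 : (1 + c) ^ n * (((s+1:ℕ):ℝ) * r 0) ≤ ∑ i ∈ Finset.Icc 1 T, r i := by
      calc (1 + c) ^ n * (((s+1:ℕ):ℝ) * r 0)
          ≤ (1 + c) ^ n * ∑ i ∈ Finset.Icc 1 (s+1), r i := by
            apply mul_le_mul_of_nonneg_left hbase (by positivity)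
        _ ≤ _ := h1
    have h3 : R * r 0 ≤ c * (1 + c) ^ n * (((s+1:ℕ):ℝ) * r 0) := by
      have := mul_le_mul_of_nonneg_right key2 hr0.le
      calc R * r 0 ≤ c * (s + 1 : ℕ) * (1 + c) ^ n * r 0 := this
        _ = c * (1 + c) ^ n * (((s+1:ℕ):ℝ) * r 0) := by ring
    have h4 : R * r 0 = r (T+1) := by
      rw [hR, div_mul_cancel₀ _ (ne_of_gt hr0)]
    calc r (T+1) = R * r 0 := h4.symm
      _ ≤ c * (1 + c) ^ n * (((s+1:ℕ):ℝ) * r 0) := h3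
      _ ≤ c * ∑ i ∈ Finset.Icc 1 T, r i := by
          have := mul_le_mul_of_nonneg_left h2 hc0.le
          calc c * (1 + c) ^ n * (((s+1:ℕ):ℝ) * r 0)
              = c * ((1 + c) ^ n * (((s+1:ℕ):ℝ) * r 0)) := by ring
            _ ≤ c * ∑ i ∈ Finset.Icc 1 T, r i := this
  linarith
end

section
/- Let E be a finite-dimensional real normed space with norm ‖·‖ and dual norm ‖g‖_* = sup_{‖u‖≤1} ⟨g,u⟩. Let η ≥ 0, let Ψ : E → ℝ be differentiable, and let z₊ minimize Ψ over the ball {x : ‖x − z‖ ≤ η}. Then ⟨∇Ψ(z₊), z − z₊⟩ = η·‖∇Ψ(z₊)‖_*. -/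
theorem stmt_4 {E : Type*} [NormedAddCommGroup E] [NormedSpace ℝ E]
    [FiniteDimensional ℝ E]
    (η : ℝ) (hη : 0 ≤ η) (Ψ : E → ℝ) (Ψ' : E → (E →L[ℝ] ℝ))
    (hdiff : ∀ x, HasFDerivAt Ψ (Ψ' x) x)
    (z zp : E) (hzp_mem : ‖zp - z‖ ≤ η)
    (hmin : ∀ x, ‖x - z‖ ≤ η → Ψ zp ≤ Ψ x) :
    (Ψ' zp) (z - zp) = η * ‖Ψ' zp‖ := by
  set s : Set E := Metric.closedBall z η with hs
  have hzp : zp ∈ s := by simpa [hs, Metric.mem_closedBall, dist_eq_norm] using hzp_mem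
  have hminOn : IsLocalMinOn Ψ s zp := by
    refine IsMinOn.localize ?_
    intro x hx
    exact hmin x (by simpa [hs, Metric.mem_closedBall, dist_eq_norm] using hx)
  have hpos : ∀ x ∈ s, 0 ≤ Ψ' zp (x - zp) := by
    intro x hx
    refine hminOn.hasFDerivWithinAt_nonneg ((hdiff zp).hasFDerivWithinAt) ?_
    exact sub_mem_posTangentConeAt_of_segment_subset
      ((convex_closedBall z η).segment_subset hzp hx)
  rcases eq_or_lt_of_le hη with h0 | h0
  · have hz : zp = z := by
      have : ‖zp - z‖ ≤ 0 := by rwa [← h0] at hzp_mem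
      have := le_antisymm this (norm_nonneg _)
      simpa [sub_eq_zero] using this
    simp [hz, ← h0]
  · -- upper bound
    have hub : Ψ' zp (z - zp) ≤ η * ‖Ψ' zp‖ := by
      calc Ψ' zp (z - zp) ≤ ‖Ψ' zp (z - zp)‖ := le_abs_self _
        _ ≤ ‖Ψ' zp‖ * ‖z - zp‖ := (Ψ' zp).le_opNorm _
        _ ≤ ‖Ψ' zp‖ * η := by
            have : ‖z - zp‖ ≤ η := by rwa [norm_sub_rev] at hzp_mem
            exact mul_le_mul_of_nonneg_left this (norm_nonneg _)
        _ = η * ‖Ψ' zp‖ := mul_comm _ _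
    -- lower bound
    have hC : 0 ≤ Ψ' zp (z - zp) / η :=
      div_nonneg (hpos z (by simp [hs, h0.le])) h0.le
    have hlb : ‖Ψ' zp‖ ≤ Ψ' zp (z - zp) / η := by
      refine ContinuousLinearMap.opNorm_le_bound _ hC fun u => ?_
      have key : ∀ v : E, ‖v‖ ≤ 1 → Ψ' zp v ≤ Ψ' zp (z - zp) / η := by
        intro v hv
        have hmem : z - η • v ∈ s := by
          simp only [hs, Metric.mem_closedBall, dist_eq_norm]
          rw [sub_sub_cancel_left, norm_neg, norm_smul, Real.norm_of_nonneg h0.le]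
          nlinarith
        have := hpos _ hmem
        have hexp : Ψ' zp (z - η • v - zp) = Ψ' zp (z - zp) - η * Ψ' zp v := by
          rw [show z - η • v - zp = (z - zp) - η • v by abel, map_sub, map_smul]
          simp
        rw [hexp] at this
        rw [le_div_iff₀ h0, mul_comm]
        linarith
      rcases eq_or_ne u 0 with rfl | hu
      · simp
      · have hnu : 0 < ‖u‖ := norm_pos_iff.mpr hu
        have hnn : ‖(‖u‖⁻¹ : ℝ) • u‖ ≤ 1 := by
          rw [norm_smul, norm_inv, norm_norm, inv_mul_cancel₀ hnu.ne']
        have h1 := key ((‖u‖⁻¹ : ℝ) • u) hnn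
        have h2 := key (-((‖u‖⁻¹ : ℝ) • u)) (by rwa [norm_neg])
        rw [map_smul, smul_eq_mul] at h1
        rw [map_neg, map_smul, smul_eq_mul] at h2
        have h1' := mul_le_mul_of_nonneg_left h1 hnu.le
        have h2' := mul_le_mul_of_nonneg_left h2 hnu.le
        rw [← mul_assoc, mul_inv_cancel₀ hnu.ne', one_mul] at h1'
        rw [mul_neg, ← mul_assoc, mul_inv_cancel₀ hnu.ne', one_mul] at h2'
        rw [Real.norm_eq_abs, abs_le, mul_comm]
        constructor <;> linarith
    have : η * ‖Ψ' zp‖ ≤ Ψ' zp (z - zp) := by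
      rw [le_div_iff₀ h0] at hlb; linarith
    linarith
end

section
/- Let f : E → ℝ be L-smooth (‖∇f(y) − ∇f(x)‖_* ≤ L‖y − x‖, hence f(y) ≤ f(x) + ⟨∇f(x), y−x⟩ + (L/2)‖y−x‖²) with L > 0. Let g = ∇f(x), m ∈ E, e = ‖g − m‖_*, a = max{‖m‖_* − e, 0}, u ∈ argmax_{‖u‖≤1} ⟨m, u⟩, η = a/L, and x₊ = x − η·u. Then f(x₊) ≤ f(x) − a²/(2L). -/
lemma smooth_upper_bound {E : Type*} [NormedAddCommGroup E] [NormedSpace ℝ E]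
    (f : E → ℝ) (f' : E → (E →L[ℝ] ℝ)) (L : ℝ) (hL : 0 < L)
    (hdiff : ∀ x, HasFDerivAt f (f' x) x)
    (hlip : ∀ x y, ‖f' y - f' x‖ ≤ L * ‖y - x‖)
    (x v : E) : f (x + v) ≤ f x + f' x v + L / 2 * ‖v‖ ^ 2 := by
  have hcf' : Continuous f' := by
    refine (LipschitzWith.of_dist_le_mul (K := ⟨L, hL.le⟩) ?_).continuous
    intro p q
    rw [dist_eq_norm, dist_eq_norm]; exact hlip q p
  have hline : ∀ t : ℝ, HasDerivAt (fun t : ℝ => x + t • v) v t := by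
    intro t
    simpa using ((hasDerivAt_id t).smul_const v).const_add x
  have hφ : ∀ t : ℝ, HasDerivAt (fun t : ℝ => f (x + t • v)) (f' (x + t • v) v) t := by
    intro t
    exact (hdiff (x + t • v)).comp_hasDerivAt t (hline t)
  have hcontd : Continuous fun t : ℝ => f' (x + t • v) v := by
    have : Continuous fun t : ℝ => f' (x + t • v) :=
      hcf'.comp (by continuity)
    exact (ContinuousLinearMap.apply ℝ ℝ v).continuous.comp this
  have hInt : IntervalIntegrable (fun t : ℝ => f' (x + t • v) v) MeasureTheory.volume 0 1 :=
    hcontd.intervalIntegrable 0 1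
  have heq : (∫ t in (0:ℝ)..1, f' (x + t • v) v) = f (x + v) - f x := by
    have := intervalIntegral.integral_eq_sub_of_hasDerivAt
      (f := fun t : ℝ => f (x + t • v)) (f' := fun t : ℝ => f' (x + t • v) v)
      (a := 0) (b := 1) (fun t _ => hφ t) hInt
    simpa using this
  have hmono : (∫ t in (0:ℝ)..1, f' (x + t • v) v)
      ≤ ∫ t in (0:ℝ)..1, (f' x v + L * t * ‖v‖ ^ 2) := by
    apply intervalIntegral.integral_mono_on (by norm_num) hInt
    · exact ((continuous_const.add (by continuity)).intervalIntegrable 0 1)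
    · intro t ht
      have h1 : f' (x + t • v) v - f' x v ≤ ‖f' (x + t • v) - f' x‖ * ‖v‖ := by
        have := (f' (x + t • v) - f' x).le_opNorm v
        have h2 : (f' (x + t • v) - f' x) v ≤ ‖(f' (x + t • v) - f' x) v‖ :=
          le_abs_self _
        simpa [ContinuousLinearMap.sub_apply] using h2.trans this
      have h3 : ‖f' (x + t • v) - f' x‖ ≤ L * (t * ‖v‖) := by
        have := hlip x (x + t • v)
        have ht0 : (0:ℝ) ≤ t := ht.1
        simpa [norm_smul, abs_of_nonneg ht0] using this
      have h4 : ‖f' (x + t • v) - f' x‖ * ‖v‖ ≤ L * (t * ‖v‖) * ‖v‖ :=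
        mul_le_mul_of_nonneg_right h3 (norm_nonneg v)
      nlinarith [h1]
  have hval : (∫ t in (0:ℝ)..1, (f' x v + L * t * ‖v‖ ^ 2)) = f' x v + L / 2 * ‖v‖ ^ 2 := by
    have : (∫ t in (0:ℝ)..1, (f' x v + L * t * ‖v‖ ^ 2))
        = (∫ _ in (0:ℝ)..1, f' x v) + ∫ t in (0:ℝ)..1, L * t * ‖v‖ ^ 2 := by
      rw [← intervalIntegral.integral_add]
      · exact intervalIntegrable_const
      · exact (by continuity : Continuous fun t : ℝ => L * t * ‖v‖ ^ 2).intervalIntegrable 0 1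
    rw [this]
    have h5 : (∫ t in (0:ℝ)..1, L * t * ‖v‖ ^ 2)
        = (L * ‖v‖ ^ 2) * ∫ t in (0:ℝ)..1, t := by
      rw [← intervalIntegral.integral_const_mul]
      congr 1; ext t; ring
    rw [h5, integral_id]
    simp
    ring
  have := heq ▸ (hmono.trans_eq hval)
  linarith

theorem stmt_6 {E : Type*} [NormedAddCommGroup E] [NormedSpace ℝ E]
    (f : E → ℝ) (f' : E → (E →L[ℝ] ℝ)) (L : ℝ) (hL : 0 < L)
    (hdiff : ∀ x, HasFDerivAt f (f' x) x)
    (hlip : ∀ x y, ‖f' y - f' x‖ ≤ L * ‖y - x‖)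
    (x : E) (m : E →L[ℝ] ℝ) (e a η : ℝ) (u : E) (xp : E)
    (he : e = ‖f' x - m‖)
    (ha : a = max (‖m‖ - e) 0)
    (hu_norm : ‖u‖ ≤ 1) (hu_max : m u = ‖m‖)
    (hη : η = a / L)
    (hxp : xp = x - η • u) :
    f xp ≤ f x - a ^ 2 / (2 * L) := by
  have ha0 : 0 ≤ a := ha ▸ le_max_right _ _
  have hxp' : xp = x + (-η) • u := by rw [hxp]; module
  have key := smooth_upper_bound f f' L hL hdiff hlip x ((-η) • u)
  rw [← hxp'] at key
  rcases eq_or_lt_of_le ha0 with h0 | hpos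
  · have hη0 : η = 0 := by rw [hη, ← h0]; simp
    have : xp = x := by rw [hxp, hη0]; simp
    rw [this, ← h0]
    simp
  · have hmax : a = ‖m‖ - e := by
      rw [ha] at hpos ⊢
      rcases le_or_gt (‖m‖ - e) 0 with h | h
      · rw [max_eq_right h] at hpos; exact absurd hpos (lt_irrefl 0)
      · exact max_eq_left h.le
    have hgu : a ≤ f' x u := by
      have h2 : ‖(f' x - m) u‖ ≤ ‖f' x - m‖ * ‖u‖ := (f' x - m).le_opNorm u
      have h3 : ‖f' x - m‖ * ‖u‖ ≤ e := by
        rw [he]; nlinarith [norm_nonneg (f' x - m)]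
      have h5 := neg_abs_le ((f' x - m) u)
      simp only [Real.norm_eq_abs] at h2
      have h4 : f' x u = m u + (f' x - m) u := by
        simp [ContinuousLinearMap.sub_apply]
      rw [h4, hu_max, hmax]; linarith
    have hηpos : 0 < η := by rw [hη]; positivity
    have happ : f' x ((-η) • u) = -η * f' x u := by simp
    have hnorm2 : ‖(-η) • u‖ ^ 2 ≤ η ^ 2 := by
      rw [norm_smul]
      have : |(-η)| = η := by rw [abs_neg, abs_of_pos hηpos]
      rw [Real.norm_eq_abs, this]
      have hu2 : ‖u‖ ^ 2 ≤ 1 := by nlinarith [norm_nonneg u]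
      nlinarith [sq_nonneg η]
    rw [happ] at key
    have hηa : η * L = a := by rw [hη, div_mul_cancel₀ a hL.ne']
    have hb : L / 2 * ‖(-η) • u‖ ^ 2 ≤ L / 2 * η ^ 2 :=
      mul_le_mul_of_nonneg_left hnorm2 (by positivity)
    have hc : -η * f' x u ≤ -(η * a) := by nlinarith [mul_le_mul_of_nonneg_left hgu hηpos.le]
    have h6 : L / 2 * η ^ 2 = a ^ 2 / (2 * L) := by
      rw [hη]; field_simp
    have h7 : η * a = L * η ^ 2 := by rw [← hηa]; ring
    linarith
end

section
/- With q = 1 − α ∈ (0,1), the Scale-Calibrated Muon momentum error satisfies e_{k+1} ≤ q·(e_k + a_k) for all k ≥ 0, where e_k = ‖∇f(x_k) − m_{k+1}‖_*, a_k = max{‖m_{k+1}‖_* − e_k, 0}, and the iterates satisfy ‖x_{k+1} − x_k‖ ≤ a_k/L with m_{k+2} = q·m_{k+1} + α·∇f(x_{k+1}). -/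
theorem stmt_7 {E : Type*} [NormedAddCommGroup E] [NormedSpace ℝ E]
    (f : E → ℝ) (f' : E → (E →L[ℝ] ℝ)) (L : ℝ) (hL : 0 < L)
    (hdiff : ∀ x, HasFDerivAt f (f' x) x)
    (hlip : ∀ x y, ‖f' y - f' x‖ ≤ L * ‖y - x‖)
    (α q : ℝ) (hα : α ∈ Set.Ioo (0:ℝ) 1) (hq : q = 1 - α)
    (x : ℕ → E) (m : ℕ → (E →L[ℝ] ℝ)) (e a : ℕ → ℝ)
    (he : ∀ k, e k = ‖f' (x k) - m (k + 1)‖)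
    (ha : ∀ k, a k = max (‖m (k + 1)‖ - e k) 0)
    (hstep : ∀ k, ‖x (k + 1) - x k‖ ≤ a k / L)
    (hm : ∀ k, m (k + 2) = q • m (k + 1) + α • f' (x (k + 1))) :
    ∀ k, e (k + 1) ≤ q * (e k + a k) := by
  intro k
  have hq0 : 0 < q := by rw [hq]; linarith [hα.2]
  have key : f' (x (k + 1)) - m (k + 2) = q • (f' (x (k + 1)) - m (k + 1)) := by
    rw [hm k, hq]
    ext v
    simp [sub_smul, smul_sub]
    ring
  have hLip : ‖f' (x (k + 1)) - f' (x k)‖ ≤ a k := by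
    calc ‖f' (x (k + 1)) - f' (x k)‖ ≤ L * ‖x (k + 1) - x k‖ := hlip _ _
    _ ≤ L * (a k / L) := by
        have := hstep k
        nlinarith
    _ = a k := by field_simp
  have htri : ‖f' (x (k + 1)) - m (k + 1)‖ ≤ e k + a k := by
    have : f' (x (k + 1)) - m (k + 1) =
        (f' (x (k + 1)) - f' (x k)) + (f' (x k) - m (k + 1)) := by abel
    rw [this]
    calc _ ≤ ‖f' (x (k + 1)) - f' (x k)‖ + ‖f' (x k) - m (k + 1)‖ := norm_add_le _ _
    _ ≤ e k + a k := by rw [he k]; linarith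
  calc e (k + 1) = ‖f' (x (k + 1)) - m (k + 2)‖ := he (k + 1)
  _ = q * ‖f' (x (k + 1)) - m (k + 1)‖ := by
      rw [key, norm_smul q (f' (x (k + 1)) - m (k + 1)), Real.norm_eq_abs, abs_of_pos hq0]
  _ ≤ q * (e k + a k) := by nlinarith
end

section
/- Let α ∈ (0,1), q = 1−α, γ = 1−q², A = γ/(16q²), and χ = min{3/8, γ³/(16q²)}. For nonnegative reals a, e, e' with e' ≤ q(e + a), and any L > 0 and Δ' ≤ Δ − a²/(2L) (with Δ, Δ' ∈ ℝ), the Lyapunov values Φ = Δ + (A/L)e² and Φ' = Δ' + (A/L)(e')² satisfy Φ' ≤ Φ − (χ/L)(a² + e²). -/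
set_option maxHeartbeats 1600000 in
theorem stmt_9 (α : ℝ) (hα : α ∈ Set.Ioo (0:ℝ) 1)
    (q γ A χ : ℝ) (hq : q = 1 - α) (hγ : γ = 1 - q ^ 2)
    (hA : A = γ / (16 * q ^ 2))
    (hχ : χ = min (3 / 8) (γ ^ 3 / (16 * q ^ 2)))
    (a e e' : ℝ) (ha : 0 ≤ a) (he : 0 ≤ e) (he' : 0 ≤ e')
    (hrec : e' ≤ q * (e + a))
    (L : ℝ) (hL : 0 < L)
    (Δ Δ' : ℝ) (hdesc : Δ' ≤ Δ - a ^ 2 / (2 * L))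
    (Φ Φ' : ℝ)
    (hΦ : Φ = Δ + (A / L) * e ^ 2)
    (hΦ' : Φ' = Δ' + (A / L) * e' ^ 2) :
    Φ' ≤ Φ - (χ / L) * (a ^ 2 + e ^ 2) := by
  obtain ⟨hα0, hα1⟩ := hα
  have hq0 : 0 < q := by rw [hq]; linarith
  have hq1 : q < 1 := by rw [hq]; linarith
  have hq2 : 0 < q ^ 2 := by positivity
  have hγ0 : 0 < γ := by rw [hγ]; nlinarith
  have hγ1 : γ < 1 := by rw [hγ]; nlinarith
  have hA0 : 0 ≤ A := by rw [hA]; positivity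
  have hχ1 : χ ≤ 3 / 8 := hχ ▸ min_le_left _ _
  have hχ2 : χ ≤ γ ^ 3 / (16 * q ^ 2) := hχ ▸ min_le_right _ _
  -- scaled facts for χ
  have h1 : 16 * q ^ 2 * χ ≤ 6 * q ^ 2 := by nlinarith
  have h2 : 16 * q ^ 2 * χ ≤ γ ^ 3 := by
    have := (le_div_iff₀ (by positivity : (0:ℝ) < 16 * q ^ 2)).mp hχ2
    linarith
  -- purely polynomial key inequality
  have hpoly : q ^ 2 * γ * (e + a) ^ 2 + 16 * q ^ 2 * χ * (a ^ 2 + e ^ 2)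
      ≤ γ * e ^ 2 + 8 * q ^ 2 * a ^ 2 := by
    have hgq : γ = 1 - q ^ 2 := hγ
    have hy : 0 ≤ q ^ 2 * (a - γ * e) ^ 2 := by positivity
    have ha1 := mul_le_mul_of_nonneg_right h1 (sq_nonneg a)
    have he1 := mul_le_mul_of_nonneg_right h2 (sq_nonneg e)
    have hga := mul_le_mul_of_nonneg_right
      (show q ^ 2 * γ ≤ q ^ 2 by nlinarith) (sq_nonneg a)
    have hy' : 2 * (q ^ 2 * γ) * (a * e) ≤ q ^ 2 * a ^ 2 + q ^ 2 * γ ^ 2 * e ^ 2 := by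
      nlinarith [hy]
    have hsum : q ^ 2 * γ * (e + a) ^ 2
        = q ^ 2 * γ * e ^ 2 + 2 * (q ^ 2 * γ) * (a * e) + q ^ 2 * γ * a ^ 2 := by ring
    have hide : q ^ 2 * γ * e ^ 2 + q ^ 2 * γ ^ 2 * e ^ 2 + γ ^ 3 * e ^ 2 = γ * e ^ 2 := by
      rw [hgq]; ring
    linarith [ha1, he1, hga, hy', hsum, hide]
  -- key inequality with A
  have h16 : (0:ℝ) < 16 * q ^ 2 := by positivity
  have hA' : A * (16 * q ^ 2) = γ := by
    rw [hA]; exact div_mul_cancel₀ _ h16.ne'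
  have hpoly' : q ^ 2 * (A * (16 * q ^ 2)) * (e + a) ^ 2 + 16 * q ^ 2 * χ * (a ^ 2 + e ^ 2)
      ≤ (A * (16 * q ^ 2)) * e ^ 2 + 8 * q ^ 2 * a ^ 2 := by rw [hA']; exact hpoly
  have hkey : q ^ 2 * A * (e + a) ^ 2 + χ * (a ^ 2 + e ^ 2) ≤ A * e ^ 2 + a ^ 2 / 2 := by
    have hscaled : 16 * q ^ 2 * (q ^ 2 * A * (e + a) ^ 2 + χ * (a ^ 2 + e ^ 2))
        ≤ 16 * q ^ 2 * (A * e ^ 2 + a ^ 2 / 2) := by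
      have r1 : 16 * q ^ 2 * (q ^ 2 * A * (e + a) ^ 2 + χ * (a ^ 2 + e ^ 2))
          = q ^ 2 * (A * (16 * q ^ 2)) * (e + a) ^ 2 + 16 * q ^ 2 * χ * (a ^ 2 + e ^ 2) := by
        ring
      have r2 : 16 * q ^ 2 * (A * e ^ 2 + a ^ 2 / 2)
          = (A * (16 * q ^ 2)) * e ^ 2 + 8 * q ^ 2 * a ^ 2 := by ring
      rw [r1, r2]; exact hpoly' 
    exact le_of_mul_le_mul_left hscaled h16
  have he'2 : e' ^ 2 ≤ q ^ 2 * (e + a) ^ 2 := by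
    have h1 : 0 ≤ q * (e + a) := by positivity
    nlinarith
  have hmain : A * e' ^ 2 + χ * (a ^ 2 + e ^ 2) ≤ A * e ^ 2 + a ^ 2 / 2 := by
    nlinarith [mul_le_mul_of_nonneg_left he'2 hA0]
  have hLne : L ≠ 0 := ne_of_gt hL
  have hLi : (0:ℝ) ≤ L⁻¹ := by positivity
  have hdiv := mul_le_mul_of_nonneg_right hmain hLi
  rw [hΦ, hΦ']
  have e1 : A / L * e' ^ 2 = A * e' ^ 2 * L⁻¹ := by field_simp
  have e2 : A / L * e ^ 2 = A * e ^ 2 * L⁻¹ := by field_simp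
  have e3 : χ / L * (a ^ 2 + e ^ 2) = χ * (a ^ 2 + e ^ 2) * L⁻¹ := by field_simp
  have e4 : a ^ 2 / (2 * L) = a ^ 2 / 2 * L⁻¹ := by field_simp
  rw [e1, e2, e3]
  rw [e4] at hdesc
  nlinarith [hdiv, hdesc]
end

section
/- Let f : E → ℝ be star-convex toward a global minimizer x⋆, let D = ‖x₀ − x⋆‖, and let gradients g_i = ∇f(x_i) and nonnegative weights ω_i be given. Define S_{k+1} = ∑_{i=0}^{k} ω_i g_i and B_{k+1} = −∑_{i=0}^{k} ω_i ⟨g_i, x_i − x₀⟩. Then B_{k+1} ≤ D·‖S_{k+1}‖_*; consequently, if ‖S_{k+1}‖_* > 0 then max{B_{k+1}, 0}/‖S_{k+1}‖_* ≤ D. -/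
open Finset

theorem stmt_11 {E : Type*} [NormedAddCommGroup E] [NormedSpace ℝ E]
    (f : E → ℝ) (f' : E → (E →L[ℝ] ℝ))
    (hdiff : ∀ y, HasFDerivAt f (f' y) y)
    (xstar : E) (hmin : ∀ y, f xstar ≤ f y)
    (hstar : ∀ y, f y - f xstar ≤ (f' y) (y - xstar))
    (x : ℕ → E) (x0 : E) (hx0 : x 0 = x0)
    (D : ℝ) (hD : D = ‖x0 - xstar‖)
    (ω : ℕ → ℝ) (hω : ∀ i, 0 ≤ ω i)
    (k : ℕ) (S : E →L[ℝ] ℝ) (B : ℝ)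
    (hS : S = ∑ i ∈ Finset.range (k + 1), ω i • f' (x i))
    (hB : B = -∑ i ∈ Finset.range (k + 1), ω i * (f' (x i)) (x i - x0)) :
    B ≤ D * ‖S‖ ∧ (0 < ‖S‖ → max B 0 / ‖S‖ ≤ D) := by
  have hDnn : 0 ≤ D := hD ▸ norm_nonneg _
  have key : B ≤ S (x0 - xstar) := by
    have hSval : S (x0 - xstar) = ∑ i ∈ Finset.range (k + 1),
        ω i * (f' (x i)) (x0 - xstar) := by
      rw [hS]
      simp [ContinuousLinearMap.sum_apply]
    rw [hB, hSval]
    rw [neg_le_iff_add_nonneg, ← Finset.sum_add_distrib]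
    apply Finset.sum_nonneg
    intro i _
    have h1 : 0 ≤ (f' (x i)) (x i - xstar) := le_trans (by linarith [hmin (x i)]) (hstar (x i))
    have h2 : (f' (x i)) (x i - xstar) = (f' (x i)) (x i - x0) + (f' (x i)) (x0 - xstar) := by
      rw [← map_add]; congr 1; abel
    have := mul_nonneg (hω i) h1
    rw [h2] at this
    nlinarith [this]
  have hBD : B ≤ D * ‖S‖ := by
    calc B ≤ S (x0 - xstar) := key
      _ ≤ ‖S‖ * ‖x0 - xstar‖ := le_trans (le_abs_self _) (S.le_opNorm _)
      _ = D * ‖S‖ := by rw [hD]; ring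
  refine ⟨hBD, fun hpos => ?_⟩
  rw [div_le_iff₀ hpos]
  rcases le_or_gt B 0 with h | h
  · rw [max_eq_right h]; positivity
  · rw [max_eq_left h.le]; linarith
end

section
/- Let f : E → ℝ be differentiable with ‖∇f(y) − ∇f(x)‖_* ≤ L‖y − x‖, let iterates satisfy ‖x_i − x_{i−1}‖ = a_i, and let m_{k+1} = (1−α)m_k + α∇f(x_k) with m_0 = ∇f(x_0), e_k = ∇f(x_k) − m_{k+1}, q = 1−α. Then e_0 = 0 and for k ≥ 1, ‖e_k‖_* ≤ qL·∑_{i=1}^{k} q^{k−i}·a_i. -/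
open Finset

theorem stmt_13 {E : Type*} [NormedAddCommGroup E] [NormedSpace ℝ E]
    (f : E → ℝ) (f' : E → (E →L[ℝ] ℝ)) (L : ℝ)
    (hdiff : ∀ x, HasFDerivAt f (f' x) x)
    (hlip : ∀ x y, ‖f' y - f' x‖ ≤ L * ‖y - x‖)
    (α q : ℝ) (hα : α ∈ Set.Ioo (0:ℝ) 1) (hq : q = 1 - α)
    (x : ℕ → E) (m : ℕ → (E →L[ℝ] ℝ)) (a : ℕ → ℝ) (e : ℕ → (E →L[ℝ] ℝ))
    (ha : ∀ i, 1 ≤ i → a i = ‖x i - x (i - 1)‖)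
    (hm0 : m 0 = f' (x 0))
    (hm : ∀ k, m (k + 1) = (1 - α) • m k + α • f' (x k))
    (he : ∀ k, e k = f' (x k) - m (k + 1)) :
    e 0 = 0 ∧
    ∀ k, 1 ≤ k → ‖e k‖ ≤ q * L * ∑ i ∈ Finset.Icc 1 k, q ^ (k - i) * a i := by
  obtain ⟨hα0, hα1⟩ := hα
  have hq0 : 0 ≤ q := by rw [hq]; linarith
  have he0 : e 0 = 0 := by
    rw [he 0, hm 0, hm0]
    ext v; simp; ring
  refine ⟨he0, ?_⟩
  -- recurrence: e (k+1) = q • (f' (x (k+1)) - f' (x k)) + q • (e k)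
  have hrec : ∀ k, e (k + 1) = q • (f' (x (k + 1)) - f' (x k)) + q • (e k) := by
    intro k
    rw [he (k + 1), hm (k + 1), he k, hq]
    ext v; simp; ring
  have key : ∀ k, ‖e k‖ ≤ q * L * ∑ i ∈ Finset.Icc 1 k, q ^ (k - i) * a i := by
    intro k
    induction k with
    | zero => simp [he0]
    | succ n ih =>
      have hlipn : ‖f' (x (n + 1)) - f' (x n)‖ ≤ L * a (n + 1) := by
        rw [ha (n + 1) (by omega)]
        simpa using hlip (x n) (x (n + 1))
      have h1 : ‖q • (f' (x (n + 1)) - f' (x n))‖ = q * ‖f' (x (n + 1)) - f' (x n)‖ := by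
        rw [show ‖q • (f' (x (n + 1)) - f' (x n))‖ = ‖q‖ * ‖f' (x (n + 1)) - f' (x n)‖
          from norm_smul q (f' (x (n + 1)) - f' (x n)), Real.norm_of_nonneg hq0]
      have h2 : ‖q • (e n)‖ = q * ‖e n‖ := by
        rw [show ‖q • (e n)‖ = ‖q‖ * ‖e n‖ from norm_smul q (e n), Real.norm_of_nonneg hq0]
      have hnorm : ‖e (n + 1)‖ ≤ q * (L * a (n + 1)) + q * ‖e n‖ := by
        rw [hrec n]
        have h3 := norm_add_le (q • (f' (x (n + 1)) - f' (x n))) (q • (e n))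
        rw [h1, h2] at h3
        have h4 := mul_le_mul_of_nonneg_left hlipn hq0
        linarith
      have hsum : ∑ i ∈ Finset.Icc 1 (n + 1), q ^ (n + 1 - i) * a i
          = a (n + 1) + q * ∑ i ∈ Finset.Icc 1 n, q ^ (n - i) * a i := by
        rw [Finset.sum_Icc_succ_top (by omega), Finset.mul_sum]
        simp only [Nat.sub_self, pow_zero, one_mul]
        rw [add_comm]
        congr 1
        apply Finset.sum_congr rfl
        intro i hi
        simp only [Finset.mem_Icc] at hi
        have : n + 1 - i = (n - i) + 1 := by omega
        rw [this, pow_succ]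
        ring
      rw [hsum]
      have := mul_le_mul_of_nonneg_left ih hq0
      nlinarith
  exact fun k _ => key k
end

section
/- Let 0 < q < r < 1 and nonnegative reals a_1, …, a_T be given, and suppose ‖e_0‖ = 0 and ‖e_k‖ ≤ qL·∑_{i=1}^{k} q^{k−i} a_i for k ≥ 1, with L > 0. Then ∑_{k=0}^{T−1} r^{T−1−k}‖e_k‖ ≤ (qL/(r−q))·(1/(1−r))^{1/2}·(∑_{i=1}^{T} r^{T−i} a_i²)^{1/2}. -/
open Finset

private lemma geo2 (q r : ℝ) (hq : 0 ≤ q) (hqr : q < r) (n : ℕ) :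
    ∑ j ∈ range n, q ^ j * r ^ (n - 1 - j) ≤ r ^ n / (r - q) := by
  have hrq : (0:ℝ) < r - q := by linarith
  rw [le_div_iff₀ hrq]
  have h := geom_sum₂_mul q r n
  nlinarith [pow_nonneg hq n]

private lemma geoB (r : ℝ) (h0 : 0 ≤ r) (h1 : r < 1) (n : ℕ) :
    ∑ j ∈ range n, r ^ j ≤ 1 / (1 - r) := by
  rw [le_div_iff₀ (by linarith)]
  have h := geom_sum_mul r n
  nlinarith [pow_nonneg h0 n]

private lemma myCS (s : Finset ℕ) (w b : ℕ → ℝ) (hw : ∀ i ∈ s, 0 ≤ w i)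
    (hb : ∀ i ∈ s, 0 ≤ b i) :
    ∑ i ∈ s, w i * b i
      ≤ Real.sqrt (∑ i ∈ s, w i) * Real.sqrt (∑ i ∈ s, w i * b i ^ 2) := by
  have key : (∑ i ∈ s, w i * b i) ^ 2
      ≤ (∑ i ∈ s, w i) * ∑ i ∈ s, w i * b i ^ 2 := by
    have h := Finset.sum_mul_sq_le_sq_mul_sq s
      (fun i => Real.sqrt (w i)) (fun i => Real.sqrt (w i) * b i)
    have e1 : ∑ i ∈ s, Real.sqrt (w i) * (Real.sqrt (w i) * b i)
        = ∑ i ∈ s, w i * b i := by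
      apply Finset.sum_congr rfl
      intro i hi
      rw [← mul_assoc, Real.mul_self_sqrt (hw i hi)]
    have e2 : ∑ i ∈ s, Real.sqrt (w i) ^ 2 = ∑ i ∈ s, w i := by
      apply Finset.sum_congr rfl
      intro i hi
      rw [Real.sq_sqrt (hw i hi)]
    have e3 : ∑ i ∈ s, (Real.sqrt (w i) * b i) ^ 2 = ∑ i ∈ s, w i * b i ^ 2 := by
      apply Finset.sum_congr rfl
      intro i hi
      rw [mul_pow, Real.sq_sqrt (hw i hi)]
    rw [e1, e2, e3] at h
    exact h
  have hnn : 0 ≤ ∑ i ∈ s, w i * b i :=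
    Finset.sum_nonneg fun i hi => mul_nonneg (hw i hi) (hb i hi)
  calc ∑ i ∈ s, w i * b i = Real.sqrt ((∑ i ∈ s, w i * b i) ^ 2) := by
        rw [Real.sqrt_sq hnn]
    _ ≤ Real.sqrt ((∑ i ∈ s, w i) * ∑ i ∈ s, w i * b i ^ 2) :=
        Real.sqrt_le_sqrt key
    _ = Real.sqrt (∑ i ∈ s, w i) * Real.sqrt (∑ i ∈ s, w i * b i ^ 2) :=
        Real.sqrt_mul (Finset.sum_nonneg fun i hi => hw i hi) _

theorem stmt_14 {F : Type*} [NormedAddCommGroup F]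
    (q r L : ℝ) (hq : 0 < q) (hqr : q < r) (hr : r < 1) (hL : 0 < L)
    (T : ℕ) (hT : 1 ≤ T) (a : ℕ → ℝ) (hanonneg : ∀ i, 0 ≤ a i)
    (e : ℕ → F) (he0 : ‖e 0‖ = 0)
    (hek : ∀ k, 1 ≤ k → ‖e k‖ ≤ q * L * ∑ i ∈ Finset.Icc 1 k, q ^ (k - i) * a i) :
    ∑ k ∈ Finset.range T, r ^ (T - 1 - k) * ‖e k‖
      ≤ (q * L / (r - q)) * Real.sqrt (1 / (1 - r))
          * Real.sqrt (∑ i ∈ Finset.Icc 1 T, r ^ (T - i) * (a i) ^ 2) := by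
  have hr0 : (0:ℝ) < r := lt_trans hq hqr
  have hrq : (0:ℝ) < r - q := by linarith
  have h1r : (0:ℝ) < 1 - r := by linarith
  have hqL : (0:ℝ) ≤ q * L := by positivity
  -- Step 1: bound each ‖e k‖
  have step1 : ∑ k ∈ Finset.range T, r ^ (T - 1 - k) * ‖e k‖
      ≤ q * L * ∑ k ∈ Finset.range T, ∑ i ∈ Finset.Icc 1 k,
          r ^ (T - 1 - k) * (q ^ (k - i) * a i) := by
    rw [Finset.mul_sum]
    apply Finset.sum_le_sum
    intro k _
    rcases Nat.eq_zero_or_pos k with h | h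
    · subst h
      rw [he0]
      simp
    · have hk := hek k h
      calc r ^ (T - 1 - k) * ‖e k‖
          ≤ r ^ (T - 1 - k) * (q * L * ∑ i ∈ Finset.Icc 1 k, q ^ (k - i) * a i) :=
            mul_le_mul_of_nonneg_left hk (pow_nonneg hr0.le _)
        _ = q * L * ∑ i ∈ Finset.Icc 1 k, r ^ (T - 1 - k) * (q ^ (k - i) * a i) := by
            simp only [Finset.mul_sum]
            exact Finset.sum_congr rfl fun i _ => by ring
  -- Step 2: swap order of summation
  have swap : ∑ k ∈ Finset.range T, ∑ i ∈ Finset.Icc 1 k,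
        r ^ (T - 1 - k) * (q ^ (k - i) * a i)
      = ∑ i ∈ Finset.Icc 1 (T - 1), ∑ k ∈ Finset.Icc i (T - 1),
          r ^ (T - 1 - k) * (q ^ (k - i) * a i) := by
    apply Finset.sum_comm'
    intro k i
    simp only [Finset.mem_range, Finset.mem_Icc]
    omega
  -- Step 3: inner geometric bound
  have step3 : ∀ i ∈ Finset.Icc 1 (T - 1),
      ∑ k ∈ Finset.Icc i (T - 1), r ^ (T - 1 - k) * (q ^ (k - i) * a i)
        ≤ (1 / (r - q)) * (r ^ (T - i) * a i) := by
    intro i hi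
    obtain ⟨hi1, hi2⟩ := Finset.mem_Icc.mp hi
    have inner : ∑ k ∈ Finset.Icc i (T - 1), r ^ (T - 1 - k) * q ^ (k - i)
        ≤ r ^ (T - i) / (r - q) := by
      rw [show Finset.Icc i (T - 1) = Finset.Ico i T by
            rw [← Finset.Ico_add_one_right_eq_Icc]; congr 1; omega,
          Finset.sum_Ico_eq_sum_range]
      calc ∑ j ∈ Finset.range (T - i), r ^ (T - 1 - (i + j)) * q ^ (i + j - i)
          = ∑ j ∈ Finset.range (T - i), q ^ j * r ^ (T - i - 1 - j) := by
            apply Finset.sum_congr rfl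
            intro j _
            have h1 : T - 1 - (i + j) = T - i - 1 - j := by omega
            have h2 : i + j - i = j := by omega
            rw [h1, h2, mul_comm]
        _ ≤ r ^ (T - i) / (r - q) := geo2 q r hq.le hqr (T - i)
    calc ∑ k ∈ Finset.Icc i (T - 1), r ^ (T - 1 - k) * (q ^ (k - i) * a i)
        = (∑ k ∈ Finset.Icc i (T - 1), r ^ (T - 1 - k) * q ^ (k - i)) * a i := by
          rw [Finset.sum_mul]
          apply Finset.sum_congr rfl
          intro k _
          ring
      _ ≤ (r ^ (T - i) / (r - q)) * a i :=
          mul_le_mul_of_nonneg_right inner (hanonneg i)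
      _ = (1 / (r - q)) * (r ^ (T - i) * a i) := by ring
  -- Step 4: enlarge index set
  have step4 : ∑ i ∈ Finset.Icc 1 (T - 1), (1 / (r - q)) * (r ^ (T - i) * a i)
      ≤ (1 / (r - q)) * ∑ i ∈ Finset.Icc 1 T, r ^ (T - i) * a i := by
    rw [← Finset.mul_sum]
    apply mul_le_mul_of_nonneg_left _ (by positivity)
    apply Finset.sum_le_sum_of_subset_of_nonneg
    · exact Finset.Icc_subset_Icc_right (by omega)
    · intro i _ _
      exact mul_nonneg (pow_nonneg hr0.le _) (hanonneg i)
  -- Step 5: Cauchy–Schwarz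
  have step5 : ∑ i ∈ Finset.Icc 1 T, r ^ (T - i) * a i
      ≤ Real.sqrt (∑ i ∈ Finset.Icc 1 T, r ^ (T - i))
          * Real.sqrt (∑ i ∈ Finset.Icc 1 T, r ^ (T - i) * a i ^ 2) :=
    myCS _ _ _ (fun i _ => pow_nonneg hr0.le _) (fun i _ => hanonneg i)
  -- Step 6: geometric series bound
  have step6 : ∑ i ∈ Finset.Icc 1 T, r ^ (T - i) ≤ 1 / (1 - r) := by
    rw [show Finset.Icc 1 T = Finset.Ico 1 (T + 1) from (Finset.Ico_add_one_right_eq_Icc 1 T).symm,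
        Finset.sum_Ico_eq_sum_range]
    have hn : T + 1 - 1 = T := by omega
    rw [hn]
    calc ∑ j ∈ Finset.range T, r ^ (T - (1 + j))
        = ∑ j ∈ Finset.range T, r ^ j := by
          rw [← Finset.sum_range_reflect (fun j => r ^ j) T]
          apply Finset.sum_congr rfl
          intro j _
          congr 1
          omega
      _ ≤ 1 / (1 - r) := geoB r hr0.le hr T
  -- Assemble
  have hS2 : 0 ≤ Real.sqrt (∑ i ∈ Finset.Icc 1 T, r ^ (T - i) * a i ^ 2) :=
    Real.sqrt_nonneg _
  calc ∑ k ∈ Finset.range T, r ^ (T - 1 - k) * ‖e k‖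
      ≤ q * L * ∑ k ∈ Finset.range T, ∑ i ∈ Finset.Icc 1 k,
          r ^ (T - 1 - k) * (q ^ (k - i) * a i) := step1
    _ = q * L * ∑ i ∈ Finset.Icc 1 (T - 1), ∑ k ∈ Finset.Icc i (T - 1),
          r ^ (T - 1 - k) * (q ^ (k - i) * a i) := by rw [swap]
    _ ≤ q * L * ∑ i ∈ Finset.Icc 1 (T - 1), (1 / (r - q)) * (r ^ (T - i) * a i) :=
        mul_le_mul_of_nonneg_left (Finset.sum_le_sum step3) hqL
    _ ≤ q * L * ((1 / (r - q)) * ∑ i ∈ Finset.Icc 1 T, r ^ (T - i) * a i) :=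
        mul_le_mul_of_nonneg_left step4 hqL
    _ = (q * L / (r - q)) * ∑ i ∈ Finset.Icc 1 T, r ^ (T - i) * a i := by ring
    _ ≤ (q * L / (r - q)) * (Real.sqrt (∑ i ∈ Finset.Icc 1 T, r ^ (T - i))
          * Real.sqrt (∑ i ∈ Finset.Icc 1 T, r ^ (T - i) * a i ^ 2)) :=
        mul_le_mul_of_nonneg_left step5 (by positivity)
    _ ≤ (q * L / (r - q)) * (Real.sqrt (1 / (1 - r))
          * Real.sqrt (∑ i ∈ Finset.Icc 1 T, r ^ (T - i) * a i ^ 2)) := by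
        apply mul_le_mul_of_nonneg_left _ (by positivity)
        exact mul_le_mul_of_nonneg_right (Real.sqrt_le_sqrt step6) hS2
    _ = (q * L / (r - q)) * Real.sqrt (1 / (1 - r))
          * Real.sqrt (∑ i ∈ Finset.Icc 1 T, r ^ (T - i) * (a i) ^ 2) := by ring
end
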